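/- With the atomization x̄_i of a compactly supported nonnegative density ρ̄ of mass L into N = L/ℓ pieces of mass ℓ, the empirical measure ρ̃ = ℓΣ_{i=0}^{N−1} δ_{x̄_i} satisfies d_{L,1}(ρ̃, ρ̄) ≤ ℓ(x̄_max − x̄_min), where d_{L,1} is the L¹ distance of cumulative distribution functions and x̄_min, x̄_max are the extremes of the convex hull of supp ρ̄. -/

import Mathlib

open MeasureTheory intervalIntegral

/-- The empirical measure obtained from the atomization is at scaled
1-Wasserstein distance at most `ℓ (x̄_max - x̄_min)` from the initial density. -/
theorem atomization_wasserstein_estimate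
    (N : ℕ) (hN : 0 < N) (ρbar : ℝ → ℝ) (L ℓ xmin xmax : ℝ)
    (hL : 0 < L) (hℓ : ℓ = L / N)
    (hmeas : Measurable ρbar) (hnn : ∀ x, 0 ≤ ρbar x)
    (hint : Integrable ρbar)
    (hsupp : HasCompactSupport ρbar)
    (hmass : ∫ x, ρbar x = L)
    (hxmin : xmin = sInf (Function.support ρbar))
    (hxmax : xmax = sSup (Function.support ρbar))
    (xbar : ℕ → ℝ)
    (hmono : ∀ i < N, xbar i ≤ xbar (i + 1))
    (h0 : xbar 0 = xmin) (hend : xbar N = xmax)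
    (hpieces : ∀ i < N, ∫ y in (xbar i)..(xbar (i + 1)), ρbar y = ℓ)
    (Ftilde Fbar : ℝ → ℝ)
    (hFtilde : ∀ x, Ftilde x =
      ∑ i ∈ Finset.range N, Set.indicator (Set.Ici (xbar i)) (fun _ => ℓ) x)
    (hFbar : ∀ x, Fbar x = ∫ y in Set.Iic x, ρbar y) :
    ∫ x : ℝ, |Ftilde x - Fbar x| ≤ ℓ * (xmax - xmin) := by
  classical
  have hNR : (0:ℝ) < N := Nat.cast_pos.mpr hN
  have hℓpos : 0 < ℓ := by rw [hℓ]; positivity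
  -- monotone chain
  have hchain : ∀ i j, i ≤ j → j ≤ N → xbar i ≤ xbar j := by
    intro i j hij hjN
    induction j with
    | zero => simp [Nat.le_zero.mp hij]
    | succ j ih =>
      rcases Nat.lt_or_ge i (j+1) with h | h
      · exact le_trans (ih (Nat.lt_succ_iff.mp h) (le_trans (Nat.le_succ j) hjN))
          (hmono j (Nat.lt_of_lt_of_le (Nat.lt_succ_self j) hjN))
      · have : i = j+1 := le_antisymm hij h
        simp [this]
  have hxmm : xmin ≤ xmax := by
    rw [← h0, ← hend]; exact hchain 0 N (Nat.zero_le _) le_rfl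
  -- vanishing outside [xmin, xmax]
  have hsub : Function.support ρbar ⊆ tsupport ρbar := subset_tsupport _
  have hbddB : BddBelow (Function.support ρbar) :=
    BddBelow.mono hsub hsupp.isCompact.bddBelow
  have hbddA : BddAbove (Function.support ρbar) :=
    BddAbove.mono hsub hsupp.isCompact.bddAbove
  have hzlt : ∀ y, y < xmin → ρbar y = 0 := by
    intro y hy
    by_contra h
    have hmem : y ∈ Function.support ρbar := h
    have := csInf_le hbddB hmem
    rw [← hxmin] at this; linarith
  have hzgt : ∀ y, xmax < y → ρbar y = 0 := by
    intro y hy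
    by_contra h
    have hmem : y ∈ Function.support ρbar := h
    have := le_csSup hbddA hmem
    rw [← hxmax] at this; linarith
  -- basic Fbar facts
  have hFmono : ∀ a b : ℝ, a ≤ b → Fbar a ≤ Fbar b := by
    intro a b hab
    rw [hFbar, hFbar]
    exact setIntegral_mono_set hint.integrableOn (ae_of_all _ hnn)
      ((Set.Iic_subset_Iic.mpr hab).eventuallyLE)
  have hFleL : ∀ x : ℝ, Fbar x ≤ L := by
    intro x
    rw [hFbar, ← hmass]
    have : (∫ x : ℝ, ρbar x) = ∫ y in Set.univ, ρbar y := by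
      rw [setIntegral_univ]
    rw [this]
    exact setIntegral_mono_set hint.integrableOn (ae_of_all _ hnn)
      ((Set.subset_univ _).eventuallyLE)
  have hFmin : Fbar xmin = 0 := by
    rw [hFbar, integral_Iic_eq_integral_Iio,
      setIntegral_congr_fun measurableSet_Iio (fun y hy => hzlt y hy),
      integral_zero]
  have hFmax : ∀ x : ℝ, xmax ≤ x → Fbar x = L := by
    intro x hx
    have hIoi : (∫ y in Set.Ioi x, ρbar y) = 0 := by
      rw [setIntegral_congr_fun measurableSet_Ioi
        (fun y hy => hzgt y (lt_of_le_of_lt hx hy)), integral_zero]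
    have := integral_Iic_add_Ioi (b := x) hint.integrableOn hint.integrableOn
    rw [hFbar]
    rw [hIoi, add_zero] at this
    rw [this, hmass]
  -- value of Fbar at the atoms
  have hFxbar : ∀ i, i ≤ N → Fbar (xbar i) = i * ℓ := by
    intro i
    induction i with
    | zero => intro _; simpa [h0] using hFmin
    | succ i ih =>
      intro hiN
      have hi : i < N := hiN
      have hsub := integral_Iic_sub_Iic (μ := volume) (f := ρbar)
        (a := xbar i) (b := xbar (i+1)) hint.integrableOn hint.integrableOn
      rw [hpieces i hi] at hsub
      have : Fbar (xbar (i+1)) = Fbar (xbar i) + ℓ := by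
        rw [hFbar, hFbar]; linarith
      rw [this, ih (le_of_lt hi)]
      push_cast; ring
  -- the pointwise bound
  have hbound : ∀ x : ℝ, |Ftilde x - Fbar x| ≤
      Set.indicator (Set.Icc xmin xmax) (fun _ => ℓ) x := by
    intro x
    rcases lt_or_ge x xmin with hx | hx
    · -- x < xmin
      have hT : Ftilde x = 0 := by
        rw [hFtilde]
        apply Finset.sum_eq_zero
        intro i hi
        apply Set.indicator_of_notMem
        intro hmem
        have : xbar 0 ≤ xbar i := hchain 0 i (Nat.zero_le _)
          (le_of_lt (Finset.mem_range.mp hi))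
        rw [h0] at this
        exact absurd (le_trans this hmem) (not_le.mpr hx)
      have hB : Fbar x = 0 := by
        rw [hFbar, setIntegral_congr_fun measurableSet_Iic
          (fun y hy => hzlt y (lt_of_le_of_lt hy hx)), integral_zero]
      have hind : Set.indicator (Set.Icc xmin xmax) (fun _ => ℓ) x = 0 :=
        Set.indicator_of_notMem (fun hmem => absurd hmem.1 (not_le.mpr hx)) _
      rw [hT, hB, hind]; simp
    rcases le_or_gt x xmax with hx2 | hx2
    · -- xmin ≤ x ≤ xmax
      have hind : Set.indicator (Set.Icc xmin xmax) (fun _ => ℓ) x = ℓ :=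
        Set.indicator_of_mem (Set.mem_Icc.mpr ⟨hx, hx2⟩) _
      set P : ℕ → Prop := fun i => xbar i ≤ x with hP
      set k : ℕ := Nat.findGreatest P (N - 1) with hk
      have hP0 : P 0 := by rw [hP]; simpa [h0] using hx
      have hkle : k ≤ N - 1 := Nat.findGreatest_le _
      have hkN : k < N := by omega
      have hPk : P k := Nat.findGreatest_spec (Nat.zero_le _) hP0
      have hnotP : ∀ j, k < j → j < N → ¬ P j := by
        intro j hj hjN
        exact Nat.findGreatest_is_greatest hj (by omega)
      -- Ftilde x = (k+1) * ℓ
      have hT : Ftilde x = (k + 1 : ℕ) * ℓ := by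
        rw [hFtilde]
        have hsubset : Finset.range (k+1) ⊆ Finset.range N :=
          Finset.range_subset_range.mpr (by omega)
        rw [← Finset.sum_subset hsubset]
        · have : ∀ i ∈ Finset.range (k+1),
              Set.indicator (Set.Ici (xbar i)) (fun _ => ℓ) x = ℓ := by
            intro i hi
            apply Set.indicator_of_mem
            exact le_trans (hchain i k (Nat.lt_succ_iff.mp (Finset.mem_range.mp hi))
              (le_of_lt hkN)) hPk
          rw [Finset.sum_congr rfl this, Finset.sum_const, Finset.card_range,
            nsmul_eq_mul]
        · intro i hiN hik
          apply Set.indicator_of_notMem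
          intro hmem
          exact hnotP i (by simpa using Nat.lt_of_succ_le (Nat.succ_le_of_lt (by
            simpa [Nat.lt_succ_iff] using (Finset.mem_range.not.mp hik |> not_lt.mp)))) (Finset.mem_range.mp hiN) hmem
      -- Fbar bounds
      have hlow : (k : ℝ) * ℓ ≤ Fbar x := by
        rw [← hFxbar k (le_of_lt hkN)]
        exact hFmono _ _ hPk
      have hup : Fbar x ≤ (k + 1 : ℕ) * ℓ := by
        rcases Nat.lt_or_ge (k+1) N with h | h
        · have hxlt : x < xbar (k+1) := not_le.mp (hnotP (k+1) (Nat.lt_succ_self k) h)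
          rw [← hFxbar (k+1) (le_of_lt h)]
          exact hFmono _ _ (le_of_lt hxlt)
        · have hkN' : k + 1 = N := le_antisymm (by omega) h
          have : ((k+1 : ℕ) : ℝ) * ℓ = L := by
            rw [hkN', hℓ]; field_simp
          rw [this]
          exact hFleL x
      rw [hind, hT]
      rw [abs_of_nonneg (by linarith)]
      push_cast at hlow hup ⊢
      linarith
    · -- x > xmax
      have hT : Ftilde x = (N : ℝ) * ℓ := by
        rw [hFtilde]
        have : ∀ i ∈ Finset.range N,
            Set.indicator (Set.Ici (xbar i)) (fun _ => ℓ) x = ℓ := by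
          intro i hi
          apply Set.indicator_of_mem
          have : xbar i ≤ xbar N := hchain i N (le_of_lt (Finset.mem_range.mp hi)) le_rfl
          rw [hend] at this
          exact le_trans this (le_of_lt hx2)
        rw [Finset.sum_congr rfl this, Finset.sum_const, Finset.card_range, nsmul_eq_mul]
      have hB : Fbar x = L := hFmax x (le_of_lt hx2)
      have hind : Set.indicator (Set.Icc xmin xmax) (fun _ => ℓ) x = 0 :=
        Set.indicator_of_notMem (fun hmem => absurd hmem.2 (not_le.mpr hx2)) _
      have : (N : ℝ) * ℓ = L := by rw [hℓ]; field_simp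
      rw [hT, hB, hind, this]; simp
  -- conclude
  have hg_int : Integrable (Set.indicator (Set.Icc xmin xmax) (fun _ => ℓ)) := by
    rw [integrable_indicator_iff measurableSet_Icc]
    exact (integrableOn_const_iff (C := ℓ)).mpr (Or.inr (by rw [Real.volume_Icc]; exact ENNReal.ofReal_lt_top))
  have hg_val : (∫ x : ℝ, Set.indicator (Set.Icc xmin xmax) (fun _ => ℓ) x)
      = ℓ * (xmax - xmin) := by
    rw [integral_indicator_const ℓ measurableSet_Icc, Real.volume_real_Icc_of_le hxmm,
      smul_eq_mul]
    ring
  by_cases hi : Integrable fun x => |Ftilde x - Fbar x|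
  · calc (∫ x : ℝ, |Ftilde x - Fbar x|)
        ≤ ∫ x : ℝ, Set.indicator (Set.Icc xmin xmax) (fun _ => ℓ) x :=
          integral_mono hi hg_int hbound
      _ = ℓ * (xmax - xmin) := hg_val
  · rw [integral_undef hi]
    have : 0 ≤ ℓ * (xmax - xmin) := mul_nonneg (le_of_lt hℓpos) (by linarith)
    linarith
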